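/- arXiv:1512.03184 — 4 statements merged into one kernel-verified Lean document; each statement's English description precedes it below -/
import Mathlib

section
/- Let (n_k) and (l_k) be sequences of natural numbers with l_k ≤ n_k for all k, such that n_k → ∞ and l_k²/n_k → 0 as k → ∞. Then n_k! / ((n_k − l_k)! · n_k^{l_k}) → 1 as k → ∞. -/
open Finset

lemma weierstrass_aux (s : Finset ℕ) (f : ℕ → ℝ) (h0 : ∀ i ∈ s, 0 ≤ f i)
    (h1 : ∀ i ∈ s, f i ≤ 1) : 1 - ∑ i ∈ s, f i ≤ ∏ i ∈ s, (1 - f i) := by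
  induction s using Finset.induction with
  | empty => simp
  | @insert a s' hx ih =>
    rw [Finset.sum_insert hx, Finset.prod_insert hx]
    have h0' : ∀ i ∈ s', 0 ≤ f i := fun i hi => h0 i (Finset.mem_insert_of_mem hi)
    have h1' : ∀ i ∈ s', f i ≤ 1 := fun i hi => h1 i (Finset.mem_insert_of_mem hi)
    have ih' := ih h0' h1'
    have ha0 := h0 a (Finset.mem_insert_self a s')
    have ha1 := h1 a (Finset.mem_insert_self a s')
    have hs0 : 0 ≤ ∑ i ∈ s', f i := Finset.sum_nonneg h0'
    nlinarith [Finset.prod_nonneg (fun i hi => sub_nonneg.2 (h1' i hi))]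

/-- **Lemma 1 (paper).** If `l_k ≤ n_k`, `n_k → ∞` and `l_k² / n_k → 0`,
then `n_k! / ((n_k − l_k)! · n_k ^ l_k) → 1`. -/
theorem stmt0 (n l : ℕ → ℕ) (hln : ∀ k, l k ≤ n k)
    (hn : Filter.Tendsto n Filter.atTop Filter.atTop)
    (hl2 : Filter.Tendsto (fun k => ((l k : ℝ)) ^ 2 / (n k : ℝ))
      Filter.atTop (nhds 0)) :
    Filter.Tendsto
      (fun k => ((n k).factorial : ℝ) /
        (((n k - l k).factorial : ℝ) * (n k : ℝ) ^ (l k)))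
      Filter.atTop (nhds 1) := by
  have hlow : Filter.Tendsto (fun k => 1 - ((l k : ℝ)) ^ 2 / (n k : ℝ))
      Filter.atTop (nhds 1) := by
    have := (tendsto_const_nhds (x := (1:ℝ)) (f := Filter.atTop)).sub hl2
    simpa using this
  have hev : ∀ᶠ k in Filter.atTop, 1 ≤ n k := hn.eventually_ge_atTop 1
  refine tendsto_of_tendsto_of_tendsto_of_le_of_le' hlow tendsto_const_nhds ?_ ?_
  · -- lower bound
    filter_upwards [hev] with k hk
    have hnpos : (0:ℝ) < (n k : ℝ) := by exact_mod_cast hk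
    have key : ((n k).factorial : ℝ) / (((n k - l k).factorial : ℝ) * (n k : ℝ) ^ (l k))
        = ∏ i ∈ range (l k), (1 - (i : ℝ) / (n k : ℝ)) := by
      have h1 : ((n k - l k).factorial : ℝ) * ((n k).descFactorial (l k) : ℝ)
          = ((n k).factorial : ℝ) := by
        exact_mod_cast congrArg (Nat.cast (R := ℝ)) (Nat.factorial_mul_descFactorial (hln k))
      have h2 : ((n k).descFactorial (l k) : ℝ) = ∏ i ∈ range (l k), ((n k : ℝ) - i) := by
        rw [Nat.descFactorial_eq_prod_range]
        push_cast [Nat.cast_prod]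
        refine Finset.prod_congr rfl fun i hi => ?_
        have : i ≤ n k := le_trans (le_of_lt (Finset.mem_range.1 hi)) (hln k)
        push_cast [Nat.cast_sub this]
        ring
      have hfpos : (0:ℝ) < ((n k - l k).factorial : ℝ) := by
        exact_mod_cast (n k - l k).factorial_pos
      have h3 : ∏ i ∈ range (l k), (1 - (i : ℝ) / (n k : ℝ))
          = (∏ i ∈ range (l k), ((n k : ℝ) - i)) / (n k : ℝ) ^ (l k) := by
        rw [show ((n k : ℝ)) ^ (l k) = ∏ _i ∈ range (l k), (n k : ℝ) by
          simp, ← Finset.prod_div_distrib]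
        refine Finset.prod_congr rfl fun i hi => ?_
        field_simp
      rw [← h1, h3, ← h2]
      have hnl : ((n k : ℝ)) ^ (l k) ≠ 0 := by positivity
      field_simp
    rw [key]
    have hb : ∀ i ∈ range (l k), (0:ℝ) ≤ (i : ℝ) / (n k : ℝ) := by
      intro i _; positivity
    have hb1 : ∀ i ∈ range (l k), (i : ℝ) / (n k : ℝ) ≤ 1 := by
      intro i hi
      rw [div_le_one hnpos]
      have : (i:ℕ) ≤ n k := le_trans (le_of_lt (Finset.mem_range.1 hi)) (hln k)
      exact_mod_cast this
    refine le_trans ?_ (weierstrass_aux _ _ hb hb1)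
    have hsum : ∑ i ∈ range (l k), (i : ℝ) / (n k : ℝ) ≤ ((l k : ℝ))^2 / (n k : ℝ) := by
      rw [← Finset.sum_div]
      gcongr
      calc ∑ i ∈ range (l k), (i:ℝ) ≤ ∑ _i ∈ range (l k), (l k : ℝ) := by
            refine Finset.sum_le_sum fun i hi => ?_
            exact_mod_cast le_of_lt (Finset.mem_range.1 hi)
        _ = (l k : ℝ) * (l k : ℝ) := by simp [mul_comm]
        _ = ((l k : ℝ))^2 := by ring
    linarith
  · -- upper bound
    filter_upwards [hev] with k hk
    have hnpos : (0:ℝ) < (n k : ℝ) := by exact_mod_cast hk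
    have h1 : ((n k - l k).factorial : ℝ) * ((n k).descFactorial (l k) : ℝ)
        = ((n k).factorial : ℝ) := by
      exact_mod_cast congrArg (Nat.cast (R := ℝ)) (Nat.factorial_mul_descFactorial (hln k))
    have hdesc : ((n k).descFactorial (l k) : ℝ) ≤ (n k : ℝ) ^ (l k) := by
      have : (n k).descFactorial (l k) ≤ (n k) ^ (l k) := Nat.descFactorial_le_pow _ _
      exact_mod_cast this
    have hfpos : (0:ℝ) < ((n k - l k).factorial : ℝ) := by
      exact_mod_cast (n k - l k).factorial_pos
    rw [div_le_one (by positivity), ← h1]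
    exact mul_le_mul_of_nonneg_left hdesc hfpos.le
end

section
/- Let (n_k) and (l_k) be sequences of natural numbers with l_k < n_k for all k and l_k²/n_k → 0 as k → ∞. Then (1 − l_k/n_k)^{−(n_k − l_k + 1/2)} · e^{−l_k} → 1 as k → ∞. -/
set_option maxHeartbeats 800000

open Filter Real

/-- Exponential-approximation step of Lemma 1:
if `l_k < n_k` and `l_k²/n_k → 0`, then
`(1 − l_k/n_k)^{−(n_k − l_k + 1/2)} · e^{−l_k} → 1`. -/
theorem stmt2 (n l : ℕ → ℕ) (hln : ∀ k, l k < n k)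
    (hl2 : Filter.Tendsto (fun k => ((l k : ℝ)) ^ 2 / (n k : ℝ))
      Filter.atTop (nhds 0)) :
    Filter.Tendsto
      (fun k => (1 - (l k : ℝ) / (n k : ℝ)) ^
          (-((n k : ℝ) - (l k : ℝ) + 1 / 2)) * Real.exp (-(l k : ℝ)))
      Filter.atTop (nhds 1) := by
  have hN : ∀ k, (0:ℝ) < (n k : ℝ) := fun k => by
    have : 0 < n k := Nat.zero_lt_of_lt (hln k)
    exact_mod_cast this
  have hLN : ∀ k, (l k : ℝ) < (n k : ℝ) := fun k => by exact_mod_cast hln k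
  have hL0 : ∀ k, (0:ℝ) ≤ (l k : ℝ) := fun k => Nat.cast_nonneg _
  have ht1 : ∀ k, (l k : ℝ) / (n k : ℝ) < 1 := fun k =>
    (div_lt_one (hN k)).2 (hLN k)
  have hpos : ∀ k, (0:ℝ) < 1 - (l k : ℝ) / (n k : ℝ) := fun k => by
    linarith [ht1 k]
  set g : ℕ → ℝ := fun k =>
    -((n k : ℝ) - (l k : ℝ) + 1/2) * Real.log (1 - (l k : ℝ) / (n k : ℝ))
      - (l k : ℝ) with hg_def
  -- lower bound, always
  have hlb : ∀ k, -(((l k : ℝ))^2 / (n k : ℝ)) ≤ g k := by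
    intro k
    set N := (n k : ℝ); set L := (l k : ℝ)
    have hN' := hN k; have hL' := hL0 k; have hLN' := hLN k
    set t := L / N with ht_def
    have htL : L = t * N := (div_mul_cancel₀ L hN'.ne').symm
    have ht0 : 0 ≤ t := div_nonneg hL' hN'.le
    have hlog : Real.log (1 - t) ≤ -t := by
      have := Real.log_le_sub_one_of_pos (hpos k)
      linarith
    have hc : (0:ℝ) < N - L + 1/2 := by linarith
    have h1 : (N - L + 1/2) * t ≤ -(N - L + 1/2) * Real.log (1 - t) := by
      nlinarith
    have hL2 : L^2 / N = t^2 * N := by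
      rw [ht_def]; field_simp
    show -(L^2 / N) ≤ -(N - L + 1/2) * Real.log (1 - t) - L
    rw [hL2]
    nlinarith [h1, htL, ht0, hN']
  -- upper bound, eventually (when L² ≤ N/2)
  have hub : ∀ᶠ k in atTop, g k ≤ ((l k : ℝ))^2 / (n k : ℝ) := by
    have hev : ∀ᶠ k in atTop, ((l k : ℝ))^2 / (n k : ℝ) < 1/2 :=
      hl2.eventually (eventually_lt_nhds (by norm_num : (0:ℝ) < 1/2))
    filter_upwards [hev] with k hk
    set N := (n k : ℝ); set L := (l k : ℝ)
    have hN' := hN k; have hL' := hL0 k; have hLN' := hLN k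
    have hhalf : L^2 ≤ N / 2 := by
      have := (div_lt_iff₀ hN').1 hk; nlinarith
    set t := L / N with ht_def
    have htL : L = t * N := (div_mul_cancel₀ L hN'.ne').symm
    have ht0 : 0 ≤ t := div_nonneg hL' hN'.le
    have hpos' := hpos k
    have hD : (0:ℝ) < N - L := by linarith
    -- -log(1-t) ≤ t/(1-t)
    have hlog : -Real.log (1 - t) ≤ t / (1 - t) := by
      have h := Real.log_le_sub_one_of_pos (inv_pos.2 hpos')
      rw [Real.log_inv] at h
      have : (1 - t)⁻¹ - 1 = t / (1 - t) := by
        have h1t : 1 - t ≠ 0 := ne_of_gt hpos'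
        rw [inv_eq_one_div, div_sub_one h1t]; ring
      linarith [this ▸ h]
    have hc : (0:ℝ) < N - L + 1/2 := by linarith
    have h1 : -(N - L + 1/2) * Real.log (1 - t) ≤ (N - L + 1/2) * (t / (1 - t)) := by
      nlinarith
    have hN0 : N ≠ 0 := hN'.ne'
    have h1mt : 1 - t = (N - L) / N := by rw [ht_def]; field_simp
    have h2 : t / (1 - t) = L / (N - L) := by
      rw [h1mt, ht_def]; field_simp
    have h3 : (N - L + 1/2) * (L / (N - L)) = L + L / (2 * (N - L)) := by
      field_simp
    -- L/(2(N-L)) ≤ L²/N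
    have h4 : L / (2 * (N - L)) ≤ L^2 / N := by
      rcases Nat.eq_zero_or_pos (l k) with h0 | h0
      · have hL0' : L = 0 := by simp [L, h0]
        simp [hL0']
      · have hL1 : (1:ℝ) ≤ L := by show (1:ℝ) ≤ (l k:ℝ); exact_mod_cast h0
        rw [div_le_div_iff₀ (by linarith) hN']
        nlinarith [mul_le_mul (show L ≤ L^2 by nlinarith) (show N ≤ 2*(N-L) by nlinarith)
          hN'.le (show (0:ℝ) ≤ L^2 by positivity)]
    show -(N - L + 1/2) * Real.log (1 - t) - L ≤ L^2 / N
    calc -(N - L + 1/2) * Real.log (1 - t) - L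
        ≤ (N - L + 1/2) * (t / (1 - t)) - L := by linarith
      _ = L / (2 * (N - L)) := by rw [h2, h3]; ring
      _ ≤ L^2 / N := h4
  -- squeeze
  have hg0 : Tendsto g atTop (nhds 0) := by
    have hneg : Tendsto (fun k => -(((l k : ℝ))^2 / (n k : ℝ))) atTop (nhds 0) := by
      simpa using hl2.neg
    exact tendsto_of_tendsto_of_tendsto_of_le_of_le' hneg hl2
      (Eventually.of_forall hlb) hub
  have hexp : Tendsto (fun k => Real.exp (g k)) atTop (nhds 1) := by
    have := (Real.continuous_exp.tendsto 0).comp hg0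
    rw [Real.exp_zero] at this; exact this
  refine hexp.congr fun k => ?_
  rw [Real.rpow_def_of_pos (hpos k), ← Real.exp_add]
  congr 1
  show -((n k : ℝ) - (l k : ℝ) + 1/2) * Real.log (1 - (l k : ℝ) / (n k : ℝ)) - (l k : ℝ) = _
  ring
end

section
/- For every integer l with 1 ≤ l ≤ n1, the expectation of X_l equals n2 · ((n1−1)!/(n1−l)!) · p1^{l−1} · b. -/
open MeasureTheory

/-- The Bernoulli measure on `Bool` with success probability `p` (for `p ∈ [0,1]`). -/
noncomputable def bernoulliMeasure (p : ℝ) : Measure Bool :=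
  ENNReal.ofReal p • Measure.dirac true + ENNReal.ofReal (1 - p) • Measure.dirac false

/-- Sample space: one Boolean indicator for each unordered pair of vertices of the
backward class `V1 = Fin n1`, and one for each pair in `V1 × V2`. -/
abbrev Omega (n1 n2 : ℕ) : Type :=
  (Sym2 (Fin n1) → Bool) × (Fin n1 × Fin n2 → Bool)

/-- Product measure: each within-`V1` edge indicator is Bernoulli(`p1`), each bridge
indicator is Bernoulli(`b`), all independent. -/
noncomputable def graphMeasure (n1 n2 : ℕ) (p1 b : ℝ) : Measure (Omega n1 n2) :=
  (Measure.pi fun _ : Sym2 (Fin n1) => bernoulliMeasure p1).prod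
    (Measure.pi fun _ : Fin n1 × Fin n2 => bernoulliMeasure b)

open scoped Classical in
/-- Entry paths of length `l` from `u`: tuples `(v_1, …, v_l, w)` with
`v_1 = u`, the `v_i ∈ V1` pairwise distinct, and `w ∈ V2`. -/
noncomputable def entryPaths (n1 n2 l : ℕ) (u : Fin n1) :
    Finset ((Fin l → Fin n1) × Fin n2) :=
  Finset.univ.filter fun P => Function.Injective P.1 ∧ ∀ h : 0 < l, P.1 ⟨0, h⟩ = u

/-- An entry path is present in the outcome `ω` if all `l − 1` within-`V1` edges
along it and its final bridge are present. -/
def present (n1 n2 l : ℕ) (P : (Fin l → Fin n1) × Fin n2) (ω : Omega n1 n2) : Prop :=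
  (∀ j : Fin (l - 1),
      ω.1 s(P.1 ⟨j.1, lt_of_lt_of_le j.2 (Nat.sub_le l 1)⟩,
            P.1 ⟨j.1 + 1, Nat.add_lt_of_lt_sub j.2⟩) = true) ∧
  ∀ h : 0 < l, ω.2 (P.1 ⟨l - 1, Nat.sub_lt h Nat.one_pos⟩, P.2) = true

open scoped Classical in
/-- `X_l`: the number of present entry paths of length `l` from `u`, as a real number. -/
noncomputable def pathCount (n1 n2 l : ℕ) (u : Fin n1) (ω : Omega n1 n2) : ℝ :=
  ((entryPaths n1 n2 l u).filter fun P => present n1 n2 l P ω).card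

/- ### Auxiliary lemmas -/

lemma bern_true (p : ℝ) : bernoulliMeasure p {true} = ENNReal.ofReal p := by
  simp [bernoulliMeasure]

lemma bern_univ (p : ℝ) (h0 : 0 ≤ p) (h1 : p ≤ 1) :
    bernoulliMeasure p Set.univ = 1 := by
  simp [bernoulliMeasure]
  rw [← ENNReal.ofReal_add h0 (by linarith)]
  simp

lemma bern_prob (p : ℝ) (h0 : 0 ≤ p) (h1 : p ≤ 1) :
    IsProbabilityMeasure (bernoulliMeasure p) := ⟨bern_univ p h0 h1⟩

instance bern_finite (p : ℝ) : IsFiniteMeasure (bernoulliMeasure p) := by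
  constructor
  simp [bernoulliMeasure]

lemma meas_all_true {ι : Type*} (s : Finset ι) :
    MeasurableSet {f : ι → Bool | ∀ i ∈ s, f i = true} := by
  have h : {f : ι → Bool | ∀ i ∈ s, f i = true} =
      ⋂ i ∈ s, (fun f : ι → Bool => f i) ⁻¹' {true} := by
    ext f; simp
  rw [h]
  exact MeasurableSet.biInter s.countable_toSet
    (fun i _ => (measurable_pi_apply i) (MeasurableSet.singleton true))

lemma pi_bern_all_true {ι : Type*} [Fintype ι] (p : ℝ) (h0 : 0 ≤ p) (h1 : p ≤ 1)
    (s : Finset ι) :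
    Measure.pi (fun _ : ι => bernoulliMeasure p) {f | ∀ i ∈ s, f i = true} =
      ENNReal.ofReal p ^ s.card := by
  classical
  have hset : {f : ι → Bool | ∀ i ∈ s, f i = true} =
      Set.univ.pi (fun i => if i ∈ s then ({true} : Set Bool) else Set.univ) := by
    ext f
    simp only [Set.mem_setOf_eq, Set.mem_pi, Set.mem_univ, true_implies]
    constructor
    · intro h i
      split <;> simp_all
    · intro h i hi
      have := h i
      rw [if_pos hi] at this
      simpa using this
  rw [hset, Measure.pi_pi]
  have hfac : ∀ i : ι, bernoulliMeasure p (if i ∈ s then ({true} : Set Bool) else Set.univ)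
      = if i ∈ s then ENNReal.ofReal p else 1 := by
    intro i; split
    · exact bern_true p
    · exact bern_univ p h0 h1
  simp only [hfac]
  rw [Finset.prod_ite_mem, Finset.univ_inter, Finset.prod_const]

lemma card_aux (n1 m : ℕ) (u : Fin n1) [DecidablePred fun f : Fin (m+1) → Fin n1 =>
      Function.Injective f ∧ ∀ h : 0 < m + 1, f ⟨0, h⟩ = u] :
    (Finset.univ.filter fun f : Fin (m+1) → Fin n1 =>
        Function.Injective f ∧ ∀ h : 0 < m + 1, f ⟨0, h⟩ = u).card
      = (n1 - 1).descFactorial m := by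
  classical
  rw [← Fintype.card_subtype]
  have e : {f : Fin (m+1) → Fin n1 //
      Function.Injective f ∧ ∀ h : 0 < m + 1, f ⟨0, h⟩ = u} ≃
      (Fin m ↪ {x : Fin n1 // x ≠ u}) :=
    { toFun := fun f =>
        ⟨fun j => ⟨f.1 j.succ, fun hc => Fin.succ_ne_zero j
            (f.2.1 (hc.trans ((f.2.2 (Nat.succ_pos m)).symm.trans
              (congrArg f.1 (Fin.mk_zero)))))⟩,
         fun j k h => Fin.succ_injective _ (f.2.1 (Subtype.ext_iff.1 h))⟩
      invFun := fun g =>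
        ⟨Fin.cons u (fun j => (g j : Fin n1)),
         by
          rw [Fin.cons_injective_iff]
          refine ⟨?_, ?_⟩
          · rintro ⟨j, hj⟩
            exact (g j).2 hj
          · intro j k h
            exact g.injective (Subtype.ext h),
         by
          intro h
          rw [Fin.mk_zero, Fin.cons_zero]⟩
      left_inv := by
        rintro ⟨f, hinj, h0⟩
        apply Subtype.ext
        funext i
        refine Fin.cases ?_ ?_ i
        · simp only [Fin.cons_zero]
          exact ((h0 (Nat.succ_pos m)).symm.trans (congrArg f (Fin.mk_zero)))
        · intro j
          simp only [Fin.cons_succ]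
          rfl
      right_inv := by
        intro g
        ext j
        simp [Fin.cons_succ] }
  rw [Fintype.card_congr e, Fintype.card_embedding_eq, Fintype.card_fin]
  congr 1
  simp [Fintype.card_subtype_compl]

/-- **Lemma 3 (exact expectation).** For `1 ≤ l ≤ n1`,
`E[X_l] = n2 · ((n1−1)!/(n1−l)!) · p1^{l−1} · b`. -/
theorem stmt6 (n1 n2 : ℕ) (hn1 : 0 < n1) (hn2 : 0 < n2) (u : Fin n1)
    (p1 b : ℝ) (hp0 : 0 ≤ p1) (hp1 : p1 ≤ 1) (hb0 : 0 ≤ b) (hb1 : b ≤ 1)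
    (l : ℕ) (hl1 : 1 ≤ l) (hln : l ≤ n1) :
    ∫ ω, pathCount n1 n2 l u ω ∂(graphMeasure n1 n2 p1 b) =
      (n2 : ℝ) * (((n1 - 1).factorial : ℝ) / ((n1 - l).factorial : ℝ)) *
        p1 ^ (l - 1) * b := by
  classical
  obtain ⟨m, rfl⟩ : ∃ m, l = m + 1 := ⟨l - 1, (Nat.succ_pred_eq_of_pos hl1).symm⟩
  haveI := bern_prob p1 hp0 hp1
  haveI := bern_prob b hb0 hb1
  set μ := graphMeasure n1 n2 p1 b with hμdef
  haveI : IsProbabilityMeasure μ := by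
    rw [hμdef]; unfold graphMeasure; infer_instance
  -- edge set of a path
  have hset : ∀ P : (Fin (m+1) → Fin n1) × Fin n2,
      {ω : Omega n1 n2 | present n1 n2 (m+1) P ω} =
      ({f : Sym2 (Fin n1) → Bool | ∀ i ∈ (Finset.univ.image fun j : Fin m =>
          s(P.1 ⟨j.1, by omega⟩, P.1 ⟨j.1+1, by omega⟩)), f i = true}) ×ˢ
      ({g : Fin n1 × Fin n2 → Bool | ∀ i ∈ ({(P.1 ⟨m, by omega⟩, P.2)} :
          Finset (Fin n1 × Fin n2)), g i = true}) := by
    intro P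
    ext ω
    simp only [present, Set.mem_setOf_eq, Set.mem_prod, Finset.mem_image,
      Finset.mem_singleton, Finset.mem_univ, true_and]
    constructor
    · rintro ⟨h1, h2⟩
      refine ⟨?_, ?_⟩
      · rintro i ⟨j, rfl⟩
        exact h1 ⟨j.1, by omega⟩
      · rintro i rfl
        exact h2 (Nat.succ_pos m)
    · rintro ⟨h1, h2⟩
      refine ⟨fun j => h1 _ ⟨⟨j.1, by omega⟩, rfl⟩, fun _ => h2 _ rfl⟩
  -- measurability of present sets
  have hms : ∀ P : (Fin (m+1) → Fin n1) × Fin n2,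
      MeasurableSet {ω : Omega n1 n2 | present n1 n2 (m+1) P ω} := by
    intro P
    rw [hset P]
    exact (meas_all_true _).prod (meas_all_true _)
  -- probability of a path being present
  have hprob : ∀ P ∈ entryPaths n1 n2 (m+1) u,
      μ {ω : Omega n1 n2 | present n1 n2 (m+1) P ω} =
        ENNReal.ofReal p1 ^ m * ENNReal.ofReal b := by
    intro P hP
    have hPinj : Function.Injective P.1 := by
      simp only [entryPaths, Finset.mem_filter] at hP
      exact hP.2.1
    rw [hset P, hμdef, graphMeasure, Measure.prod_prod,
      pi_bern_all_true p1 hp0 hp1, pi_bern_all_true b hb0 hb1]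
    have hinj : Function.Injective (fun j : Fin m =>
        s(P.1 ⟨j.1, by omega⟩, P.1 ⟨j.1+1, by omega⟩)) := by
      intro j k h
      simp only [Sym2.eq_iff] at h
      rcases h with ⟨h1, h2⟩ | ⟨h1, h2⟩
      · have := hPinj h1
        exact Fin.ext (by simpa using congrArg Fin.val this)
      · have e1 := congrArg Fin.val (hPinj h1)
        have e2 := congrArg Fin.val (hPinj h2)
        simp only at e1 e2
        exact Fin.ext (by omega)
    rw [Finset.card_image_of_injective _ hinj, Finset.card_univ,
      Fintype.card_fin, Finset.card_singleton, pow_one]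
  -- rewrite pathCount as a sum of indicators
  have hpc : ∀ ω : Omega n1 n2, pathCount n1 n2 (m+1) u ω =
      ∑ P ∈ entryPaths n1 n2 (m+1) u,
        Set.indicator {ω' : Omega n1 n2 | present n1 n2 (m+1) P ω'}
          (fun _ => (1:ℝ)) ω := by
    intro ω
    rw [pathCount, Finset.card_filter]
    push_cast
    refine Finset.sum_congr rfl fun P _ => ?_
    simp [Set.indicator_apply]
  have hint : ∀ P ∈ entryPaths n1 n2 (m+1) u,
      Integrable (Set.indicator {ω' : Omega n1 n2 | present n1 n2 (m+1) P ω'}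
        (fun _ => (1:ℝ))) μ := by
    intro P _
    exact (integrable_const (1:ℝ)).indicator (hms P)
  calc ∫ ω, pathCount n1 n2 (m+1) u ω ∂μ
      = ∫ ω, (∑ P ∈ entryPaths n1 n2 (m+1) u,
          Set.indicator {ω' : Omega n1 n2 | present n1 n2 (m+1) P ω'}
            (fun _ => (1:ℝ)) ω) ∂μ := by
        exact integral_congr_ae (Filter.Eventually.of_forall hpc)
    _ = ∑ P ∈ entryPaths n1 n2 (m+1) u,
          ∫ ω, Set.indicator {ω' : Omega n1 n2 | present n1 n2 (m+1) P ω'}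
            (fun _ => (1:ℝ)) ω ∂μ := integral_finset_sum _ hint
    _ = ∑ P ∈ entryPaths n1 n2 (m+1) u,
          (μ {ω' : Omega n1 n2 | present n1 n2 (m+1) P ω'}).toReal := by
        refine Finset.sum_congr rfl fun P _ => ?_
        rw [integral_indicator_const (1:ℝ) (hms P), smul_eq_mul, mul_one]
        rfl
    _ = ∑ P ∈ entryPaths n1 n2 (m+1) u, p1 ^ m * b := by
        refine Finset.sum_congr rfl fun P hP => ?_
        rw [hprob P hP, ENNReal.toReal_mul, ENNReal.toReal_pow,
          ENNReal.toReal_ofReal hp0, ENNReal.toReal_ofReal hb0]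
    _ = ((entryPaths n1 n2 (m+1) u).card : ℝ) * (p1 ^ m * b) := by
        rw [Finset.sum_const, nsmul_eq_mul]
  -- counting entry paths
  have hcount : (entryPaths n1 n2 (m+1) u).card = (n1 - 1).descFactorial m * n2 := by
    have hsplit : entryPaths n1 n2 (m+1) u =
        (Finset.univ.filter fun f : Fin (m+1) → Fin n1 =>
          Function.Injective f ∧ ∀ h : 0 < m + 1, f ⟨0, h⟩ = u) ×ˢ Finset.univ := by
      ext P
      simp [entryPaths, Finset.mem_product]
    rw [hsplit, Finset.card_product, card_aux n1 m u, Finset.card_univ, Fintype.card_fin]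
  rw [hcount]
  -- arithmetic
  have hml : m ≤ n1 - 1 := by omega
  have hdf : ((n1 - 1).descFactorial m : ℝ) =
      ((n1 - 1).factorial : ℝ) / ((n1 - (m+1)).factorial : ℝ) := by
    have h2 : n1 - 1 - m = n1 - (m+1) := by omega
    rw [Nat.descFactorial_eq_div hml, h2]
    rw [Nat.cast_div (Nat.factorial_dvd_factorial (by omega))
      (by exact_mod_cast (Nat.factorial_pos _).ne')]
  rw [Nat.cast_mul, hdf]
  have : m + 1 - 1 = m := by omega
  rw [this]
  ring
end

section
/- Assume p1, b ∈ (0,1], n1 · p1 > 1, n1 · p1 ≥ log(n1), and n2 · b < 1, and let d0 = log(1/(n2·b)) / log(n1·p1). Then for every integer i with 1 ≤ i ≤ min(d0, n1), the probability that there exists at least one present entry path of length i from u satisfies P(X_i ≥ 1) ≤ 1/(n1 · p1) ≤ 1/log(n1). -/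
open MeasureTheory

instance (p : ℝ) : IsFiniteMeasure (bernoulliMeasure p) := by
  constructor
  simp only [bernoulliMeasure, Measure.add_apply, Measure.smul_apply, Measure.dirac_apply_of_mem
    (Set.mem_univ _), smul_eq_mul, mul_one]
  exact ENNReal.add_lt_top.2 ⟨ENNReal.ofReal_lt_top, ENNReal.ofReal_lt_top⟩

lemma pi_measure_true {ι : Type*} [Fintype ι] (p : ℝ) (hp0 : 0 ≤ p) (hp1 : p ≤ 1)
    (S : Finset ι) :
    (Measure.pi fun _ : ι => bernoulliMeasure p) {f | ∀ j ∈ S, f j = true}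
      = ENNReal.ofReal p ^ S.card := by
  classical
  have hset : {f : ι → Bool | ∀ j ∈ S, f j = true}
      = Set.pi Set.univ (fun j => if j ∈ S then {true} else Set.univ) := by
    ext f
    simp only [Set.mem_setOf_eq, Set.mem_pi, Set.mem_univ, true_implies]
    constructor
    · intro h j
      by_cases hj : j ∈ S <;> simp [hj, h j]
    · intro h j hj
      have := h j; simpa [hj] using this
  rw [hset, Measure.pi_pi]
  calc ∏ j, bernoulliMeasure p (if j ∈ S then {true} else Set.univ)
      = ∏ j, (if j ∈ S then ENNReal.ofReal p else 1) := by
        refine Finset.prod_congr rfl fun j _ => ?_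
        split
        · exact bern_true p
        · exact bern_univ p hp0 hp1
    _ = ∏ j ∈ S, ENNReal.ofReal p := by
        rw [Finset.prod_ite_mem Finset.univ S fun _ => ENNReal.ofReal p,
          Finset.univ_inter]
    _ = ENNReal.ofReal p ^ S.card := Finset.prod_const _

lemma present_measure (n1 n2 i : ℕ) (hi1 : 1 ≤ i) (p1 b : ℝ)
    (hp0 : 0 ≤ p1) (hp1 : p1 ≤ 1) (hb0 : 0 ≤ b) (hb1 : b ≤ 1)
    (P : (Fin i → Fin n1) × Fin n2) (hinj : Function.Injective P.1) :
    graphMeasure n1 n2 p1 b {ω | present n1 n2 i P ω}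
      = ENNReal.ofReal p1 ^ (i - 1) * ENNReal.ofReal b := by
  classical
  set e : Fin (i - 1) → Sym2 (Fin n1) := fun j =>
    s(P.1 ⟨j.1, lt_of_lt_of_le j.2 (Nat.sub_le i 1)⟩,
      P.1 ⟨j.1 + 1, Nat.add_lt_of_lt_sub j.2⟩) with he
  have hei : Function.Injective e := by
    intro j k hjk
    simp only [he, Sym2.eq_iff] at hjk
    rcases hjk with ⟨h1, _⟩ | ⟨h1, h2⟩
    · have := hinj h1
      exact Fin.ext (by simpa [Fin.ext_iff] using this)
    · have e1 := hinj h1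
      have e2 := hinj h2
      simp only [Fin.ext_iff] at e1 e2 ⊢
      omega
  set E : Finset (Sym2 (Fin n1)) := Finset.image e Finset.univ with hE
  set q : Fin n1 × Fin n2 := (P.1 ⟨i - 1, Nat.sub_lt hi1 Nat.one_pos⟩, P.2) with hq
  have hset : {ω : Omega n1 n2 | present n1 n2 i P ω}
      = {f : Sym2 (Fin n1) → Bool | ∀ s ∈ E, f s = true} ×ˢ
        {g : Fin n1 × Fin n2 → Bool | ∀ r ∈ ({q} : Finset _), g r = true} := by
    ext ω
    simp only [Set.mem_setOf_eq, Set.mem_prod, present, hE, Finset.mem_image,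
      Finset.mem_singleton, Finset.mem_univ, true_and]
    constructor
    · rintro ⟨h1, h2⟩
      refine ⟨fun s ⟨j, hj⟩ => hj ▸ h1 j, fun r hr => hr ▸ h2 hi1⟩
    · rintro ⟨h1, h2⟩
      exact ⟨fun j => h1 (e j) ⟨j, rfl⟩, fun _ => h2 q rfl⟩
  rw [hset, graphMeasure, Measure.prod_prod, pi_measure_true p1 hp0 hp1,
    pi_measure_true b hb0 hb1]
  rw [hE, Finset.card_image_of_injective _ hei]
  simp

lemma entryPaths_card (n1 n2 i : ℕ) (hi1 : 1 ≤ i) (u : Fin n1) :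
    (entryPaths n1 n2 i u).card ≤ n1 ^ (i - 1) * n2 := by
  classical
  have h := Finset.card_le_card_of_injOn
    (f := fun P : (Fin i → Fin n1) × Fin n2 =>
      ((fun j : Fin (i - 1) => P.1 ⟨j.1 + 1, Nat.add_lt_of_lt_sub j.2⟩, P.2) :
        (Fin (i - 1) → Fin n1) × Fin n2))
    (s := entryPaths n1 n2 i u) (t := Finset.univ)
    (fun _ _ => Finset.mem_univ _) ?_
  · calc (entryPaths n1 n2 i u).card
        ≤ (Finset.univ : Finset ((Fin (i-1) → Fin n1) × Fin n2)).card := h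
      _ = n1 ^ (i - 1) * n2 := by simp [Finset.card_univ]
  · intro P hP Q hQ hPQ
    rw [Finset.mem_coe] at hP hQ
    simp only [entryPaths, Finset.mem_filter] at hP hQ
    simp only [Prod.ext_iff, funext_iff] at hPQ ⊢
    obtain ⟨h1, h2⟩ := hPQ
    refine ⟨fun k => ?_, h2⟩
    rcases Nat.eq_zero_or_pos k.1 with hk | hk
    · have : k = ⟨0, Nat.lt_of_lt_of_le Nat.one_pos hi1⟩ := Fin.ext hk
      rw [this, hP.2.2 (Nat.lt_of_lt_of_le Nat.one_pos hi1),
        hQ.2.2 (Nat.lt_of_lt_of_le Nat.one_pos hi1)]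
    · have hk' : k.1 - 1 < i - 1 := by omega
      have := h1 ⟨k.1 - 1, hk'⟩
      have hke : k = ⟨(k.1 - 1) + 1, Nat.add_lt_of_lt_sub hk'⟩ :=
        Fin.ext (show k.1 = k.1 - 1 + 1 by omega)
      rw [hke]
      exact this

/-- **Theorem 2 (paper).** If `n1·p1 > 1`, `n1·p1 ≥ log n1` and `n2·b < 1`, then with
`d0 = log(1/(n2·b)) / log(n1·p1)`, for every `1 ≤ i ≤ min(d0, n1)` we have
`P(X_i ≥ 1) ≤ 1/(n1·p1) ≤ 1/log n1`. -/
theorem stmt11 (n1 n2 : ℕ) (hn1 : 0 < n1) (hn2 : 0 < n2) (u : Fin n1)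
    (p1 b : ℝ) (hp0 : 0 < p1) (hp1 : p1 ≤ 1) (hb0 : 0 < b) (hb1 : b ≤ 1)
    (hnp : 1 < (n1 : ℝ) * p1) (hnplog : Real.log n1 ≤ (n1 : ℝ) * p1)
    (hnb : (n2 : ℝ) * b < 1)
    (d0 : ℝ) (hd0 : d0 = Real.log (1 / ((n2 : ℝ) * b)) / Real.log ((n1 : ℝ) * p1))
    (i : ℕ) (hi1 : 1 ≤ i) (hid0 : (i : ℝ) ≤ d0) (hin : i ≤ n1) :
    graphMeasure n1 n2 p1 b {ω | 1 ≤ pathCount n1 n2 i u ω} ≤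
        ENNReal.ofReal (1 / ((n1 : ℝ) * p1)) ∧
      1 / ((n1 : ℝ) * p1) ≤ 1 / Real.log n1 := by
  classical
  set x : ℝ := (n1 : ℝ) * p1 with hx
  set y : ℝ := (n2 : ℝ) * b with hy
  have hx1 : 1 < x := hnp
  have hy0 : 0 < y := mul_pos (by exact_mod_cast hn2) hb0
  have hlogx : 0 < Real.log x := Real.log_pos hx1
  -- key real inequality : x^(i-1) * y ≤ 1/x
  have hxi : x ^ i ≤ 1 / y := by
    have h1 : (i : ℝ) * Real.log x ≤ Real.log (1 / y) := by
      rw [hd0] at hid0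
      calc (i : ℝ) * Real.log x ≤ (Real.log (1 / y) / Real.log x) * Real.log x :=
        mul_le_mul_of_nonneg_right hid0 hlogx.le
      _ = Real.log (1 / y) := div_mul_cancel₀ _ hlogx.ne'
    have h2 : Real.log (x ^ i) ≤ Real.log (1 / y) := by
      rwa [Real.log_pow]
      -- note : log (x^i) = i * log x
    have hxpos : (0:ℝ) < x ^ i := pow_pos (by linarith) i
    have := Real.exp_le_exp.2 h2
    rwa [Real.exp_log hxpos, Real.exp_log (by positivity)] at this
  have hkey : x ^ (i - 1) * y ≤ 1 / x := by
    have hxe : x ^ i = x ^ (i - 1) * x := by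
      rw [← pow_succ]; congr 1; omega
    rw [hxe] at hxi
    rw [le_div_iff₀ (by linarith)]
    have : x ^ (i - 1) * x * y ≤ (1 / y) * y :=
      mul_le_mul_of_nonneg_right hxi hy0.le
    rw [one_div, inv_mul_cancel₀ hy0.ne'] at this
    linarith [this]
  constructor
  · -- union bound
    have hsub : {ω : Omega n1 n2 | 1 ≤ pathCount n1 n2 i u ω}
        ⊆ ⋃ P ∈ entryPaths n1 n2 i u, {ω | present n1 n2 i P ω} := by
      intro ω hω
      simp only [Set.mem_setOf_eq, pathCount] at hω
      have : 0 < ((entryPaths n1 n2 i u).filter fun P => present n1 n2 i P ω).card := by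
        by_contra h
        push_neg at h
        interval_cases h' : ((entryPaths n1 n2 i u).filter
          fun P => present n1 n2 i P ω).card
        · simp [h'] at hω; linarith
      obtain ⟨P, hP⟩ := Finset.card_pos.mp this
      rw [Finset.mem_filter] at hP
      exact Set.mem_biUnion hP.1 hP.2
    have hunion : graphMeasure n1 n2 p1 b {ω | 1 ≤ pathCount n1 n2 i u ω}
        ≤ ∑ P ∈ entryPaths n1 n2 i u, graphMeasure n1 n2 p1 b {ω | present n1 n2 i P ω} :=
      le_trans (measure_mono hsub) (measure_biUnion_finset_le _ _)
    have hsum : ∑ P ∈ entryPaths n1 n2 i u, graphMeasure n1 n2 p1 b {ω | present n1 n2 i P ω}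
        = (entryPaths n1 n2 i u).card *
          (ENNReal.ofReal p1 ^ (i - 1) * ENNReal.ofReal b) := by
      rw [Finset.sum_congr rfl fun P hP => ?_, Finset.sum_const, nsmul_eq_mul]
      have hmem := hP
      simp only [entryPaths, Finset.mem_filter] at hmem
      exact present_measure n1 n2 i hi1 p1 b hp0.le hp1 hb0.le hb1 P hmem.2.1
    have hcard : ((entryPaths n1 n2 i u).card : ENNReal) ≤ ((n1 ^ (i-1) * n2 : ℕ) : ENNReal) := by
      exact_mod_cast entryPaths_card n1 n2 i hi1 u
    calc graphMeasure n1 n2 p1 b {ω | 1 ≤ pathCount n1 n2 i u ω}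
        ≤ (entryPaths n1 n2 i u).card *
          (ENNReal.ofReal p1 ^ (i - 1) * ENNReal.ofReal b) := hunion.trans_eq hsum
      _ ≤ ((n1 ^ (i-1) * n2 : ℕ) : ENNReal) *
          (ENNReal.ofReal p1 ^ (i - 1) * ENNReal.ofReal b) :=
            mul_le_mul_left hcard _
      _ = ENNReal.ofReal ((n1:ℝ) ^ (i-1) * n2 * (p1 ^ (i-1) * b)) := by
            rw [ENNReal.ofReal_mul (by positivity), ENNReal.ofReal_mul (by positivity),
              ENNReal.ofReal_mul (by positivity), ENNReal.ofReal_pow hp0.le,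
              ENNReal.ofReal_pow (by positivity), ENNReal.ofReal_natCast,
              ENNReal.ofReal_natCast]
            push_cast
            ring
      _ ≤ ENNReal.ofReal (1 / ((n1 : ℝ) * p1)) := by
            apply ENNReal.ofReal_le_ofReal
            calc (n1:ℝ) ^ (i-1) * n2 * (p1 ^ (i-1) * b)
                = x ^ (i-1) * y := by rw [hx, hy, mul_pow]; ring
              _ ≤ 1 / x := hkey
  · have hn1R : (1:ℝ) < (n1:ℝ) := by
      have h0 : (0:ℝ) ≤ (n1:ℝ) := Nat.cast_nonneg n1
      nlinarith
    exact one_div_le_one_div_of_le (Real.log_pos hn1R) hnplog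
end
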